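/- Let ρ_AB and ρ_BC be two-qubit states, with t^A₁ ≥ t^A₂ the two largest eigenvalues of T_{ρ_AB}ᵀ T_{ρ_AB} and t^C₁ ≥ t^C₂ the two largest eigenvalues of T_{ρ_BC}ᵀ T_{ρ_BC}. Then the maximal bilocality parameter satisfies B_max = √(√(t^A₁ t^C₁) + √(t^A₂ t^C₂)) ≤ √2, with equality when ρ_AB and ρ_BC are both the singlet state |ψ⁻⟩⟨ψ⁻| with |ψ⁻⟩ = (|01⟩−|10⟩)/√2. -/

import Mathlib

open Matrix Kronecker Complex ComplexOrder

/-- The Pauli matrices σ₁ = σ_x, σ₂ = σ_y, σ₃ = σ_z. -/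
noncomputable def pauli : Fin 3 → Matrix (Fin 2) (Fin 2) ℂ :=
  ![!![0, 1; 1, 0], !![0, -Complex.I; Complex.I, 0], !![1, 0; 0, -1]]

/-- For v ∈ ℝ³, the matrix v·σ = v₁σ_x + v₂σ_y + v₃σ_z. -/
noncomputable def pauliVec (v : Fin 3 → ℝ) : Matrix (Fin 2) (Fin 2) ℂ :=
  (v 0 : ℂ) • pauli 0 + (v 1 : ℂ) • pauli 1 + (v 2 : ℂ) • pauli 2

/-- A two-qubit state: a 4×4 complex positive semidefinite matrix of trace 1. -/
def TwoQubitState (ρ : Matrix (Fin 2 × Fin 2) (Fin 2 × Fin 2) ℂ) : Prop :=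
  ρ.PosSemidef ∧ ρ.trace = 1

/-- The correlation matrix of a two-qubit state: (T_ρ)_{nm} = Tr[(σ_n ⊗ σ_m) ρ]. -/
noncomputable def corr (ρ : Matrix (Fin 2 × Fin 2) (Fin 2 × Fin 2) ℂ) :
    Matrix (Fin 3) (Fin 3) ℝ :=
  Matrix.of fun n m => ((pauli n ⊗ₖ pauli m) * ρ).trace.re

/-- The two largest eigenvalues (with multiplicity, in decreasing order) of a
    symmetric real 3×3 matrix, as the pair (largest, second largest). -/
noncomputable def topEigs (M : Matrix (Fin 3) (Fin 3) ℝ) : ℝ × ℝ :=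
  if h : M.IsHermitian then
    ((h.eigenvalues ∘ Tuple.sort h.eigenvalues) 2,
     (h.eigenvalues ∘ Tuple.sort h.eigenvalues) 1)
  else 0

/-- Computational basis vectors of ℂ² ⊗ ℂ² ≅ ℂ⁴. -/
def ket (i j : Fin 2) : (Fin 2 × Fin 2) → ℂ := fun p => if p = (i, j) then 1 else 0

/-- The singlet state |ψ⁻⟩ = (|01⟩ − |10⟩)/√2. -/
noncomputable def psiMinus : (Fin 2 × Fin 2) → ℂ := ((Real.sqrt 2 : ℂ))⁻¹ • (ket 0 1 - ket 1 0)

/-- The rank-one projection |v⟩⟨v|. -/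
noncomputable def proj (v : (Fin 2 × Fin 2) → ℂ) :
    Matrix (Fin 2 × Fin 2) (Fin 2 × Fin 2) ℂ :=
  Matrix.vecMulVec v (star v)

/-! ### Auxiliary lemmas -/

lemma pauliVec_mul_self (a : Fin 3 → ℝ) :
    pauliVec a * pauliVec a = ((∑ i, a i ^ 2 : ℝ) : ℂ) • 1 := by
  ext i j
  fin_cases i <;> fin_cases j <;>
    simp [pauliVec, pauli, Matrix.mul_apply, Fin.sum_univ_succ, Matrix.one_apply,
      Matrix.add_apply, Matrix.smul_apply, Fin.sum_univ_three] <;>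
    ring_nf <;> simp [Complex.I_sq] <;> ring

lemma pauliVec_herm (a : Fin 3 → ℝ) : (pauliVec a)ᴴ = pauliVec a := by
  ext i j
  fin_cases i <;> fin_cases j <;>
    simp [pauliVec, pauli, Matrix.conjTranspose_apply]

lemma psd_trace_re_nonneg {n : Type*} [Fintype n] [DecidableEq n]
    {M : Matrix n n ℂ} (hM : M.PosSemidef) : 0 ≤ M.trace.re := by
  have h : ∀ i, 0 ≤ (M i i).re := by
    intro i
    have := hM.re_dotProduct_nonneg (Pi.single i 1)
    simpa [dotProduct, Matrix.mulVec, Pi.single_apply, Finset.sum_ite_eq] using this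
  rw [Matrix.trace, Complex.re_sum]
  exact Finset.sum_nonneg fun i _ => h i

lemma trace_kron_expand (a b : Fin 3 → ℝ) (ρ : Matrix (Fin 2 × Fin 2) (Fin 2 × Fin 2) ℂ) :
    (((pauliVec a ⊗ₖ pauliVec b) * ρ).trace).re
      = ∑ n, ∑ m, a n * b m * corr ρ n m := by
  simp only [pauliVec, add_kronecker, kronecker_add, smul_kronecker, kronecker_smul,
    Matrix.add_mul, Matrix.smul_mul, Matrix.trace_add, Matrix.trace_smul, smul_smul,
    smul_eq_mul, Complex.add_re]
  simp only [Fin.sum_univ_three, corr, Matrix.of_apply, ← Complex.ofReal_mul,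
    Complex.re_ofReal_mul, Complex.add_re]
  ring

lemma corr_dot_le (ρ : Matrix (Fin 2 × Fin 2) (Fin 2 × Fin 2) ℂ) (h : TwoQubitState ρ)
    {a b : Fin 3 → ℝ} (ha : ∑ i, a i ^ 2 = 1) (hb : ∑ i, b i ^ 2 = 1) :
    ∑ n, ∑ m, a n * b m * corr ρ n m ≤ 1 := by
  set H := pauliVec a ⊗ₖ pauliVec b with hHdef
  have hH : Hᴴ = H := by
    rw [hHdef]
    ext ⟨i, j⟩ ⟨k, l⟩
    simp only [Matrix.conjTranspose_apply, Matrix.kroneckerMap_apply, star_mul']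
    rw [← Matrix.conjTranspose_apply, ← Matrix.conjTranspose_apply,
      pauliVec_herm, pauliVec_herm]
  have hH2 : H * H = 1 := by
    rw [hHdef, ← Matrix.mul_kronecker_mul, pauliVec_mul_self, pauliVec_mul_self, ha, hb,
      Matrix.smul_kronecker, Matrix.kronecker_smul, Matrix.one_kronecker_one]
    norm_num
  have expand : (1 - H) * (1 - H) * ρ = ρ - H * ρ - H * ρ + (H * H) * ρ := by noncomm_ring
  have key : 0 ≤ (((1 - H) * ρ * (1 - H)ᴴ).trace).re :=
    psd_trace_re_nonneg (h.1.mul_mul_conjTranspose_same _)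
  have e1 : ((1 - H) * ρ * (1 - H)ᴴ).trace = 2 - 2 * ((H * ρ).trace) := by
    rw [Matrix.conjTranspose_sub, Matrix.conjTranspose_one, hH, Matrix.trace_mul_cycle,
      expand, hH2, Matrix.one_mul]
    simp only [Matrix.trace_sub, Matrix.trace_add, h.2]
    ring
  rw [e1] at key
  have hle : ((H * ρ).trace).re ≤ 1 := by
    simp only [Complex.sub_re, Complex.mul_re] at key
    norm_num at key
    linarith
  calc ∑ n, ∑ m, a n * b m * corr ρ n m = ((H * ρ).trace).re :=
        (trace_kron_expand a b ρ).symm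
    _ ≤ 1 := hle

lemma eig_mem_Icc (ρ : Matrix (Fin 2 × Fin 2) (Fin 2 × Fin 2) ℂ) (h : TwoQubitState ρ)
    (hM : ((corr ρ)ᵀ * corr ρ).IsHermitian) (j : Fin 3) :
    hM.eigenvalues j ∈ Set.Icc (0 : ℝ) 1 := by
  set T := corr ρ with hT
  set v : Fin 3 → ℝ := ⇑(hM.eigenvectorBasis j) with hv
  have hnorm : ‖hM.eigenvectorBasis j‖ = 1 := hM.eigenvectorBasis.orthonormal.1 j
  have hv1 : ∑ i, v i ^ 2 = 1 := by
    have h1 : Real.sqrt (∑ i, ‖v i‖ ^ 2) = 1 := by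
      rw [← EuclideanSpace.norm_eq]; exact hnorm
    have h2 := congrArg (· ^ 2) h1
    simp only [Real.sq_sqrt (Finset.sum_nonneg fun i _ => sq_nonneg _)] at h2
    simpa [Real.norm_eq_abs, sq_abs] using h2
  have hmv : (Tᵀ * T) *ᵥ v = hM.eigenvalues j • v := hM.mulVec_eigenvectorBasis j
  set u : Fin 3 → ℝ := T *ᵥ v with hu
  have hμ : hM.eigenvalues j = ∑ m, u m ^ 2 := by
    have e1 : v ⬝ᵥ ((Tᵀ * T) *ᵥ v) = hM.eigenvalues j := by
      rw [hmv, dotProduct_smul, smul_eq_mul]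
      have : v ⬝ᵥ v = ∑ i, v i ^ 2 := by simp [dotProduct, sq]
      rw [this, hv1, mul_one]
    have e2 : v ⬝ᵥ ((Tᵀ * T) *ᵥ v) = ∑ m, u m ^ 2 := by
      rw [← Matrix.mulVec_mulVec, Matrix.dotProduct_mulVec, Matrix.vecMul_transpose]
      simp [hu, dotProduct, sq]
    rw [← e1, e2]
  have hnn : 0 ≤ hM.eigenvalues j := hμ ▸ Finset.sum_nonneg fun i _ => sq_nonneg _
  refine ⟨hnn, ?_⟩
  rcases eq_or_lt_of_le hnn with hz | hp
  · rw [← hz]; norm_num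
  · set s := Real.sqrt (hM.eigenvalues j) with hs
    have hs0 : 0 < s := Real.sqrt_pos.mpr hp
    set w : Fin 3 → ℝ := fun n => s⁻¹ * u n with hw
    have hw1 : ∑ i, w i ^ 2 = 1 := by
      simp only [hw, mul_pow, ← Finset.mul_sum, ← hμ]
      rw [hs, ← Real.sqrt_inv, Real.sq_sqrt (inv_nonneg.mpr hnn)]
      exact inv_mul_cancel₀ (ne_of_gt hp)
    have key : ∑ n, ∑ m, w n * v m * T n m = s := by
      have hterm : ∀ n, ∑ m, w n * v m * T n m = w n * u n := by
        intro n
        have hun : u n = ∑ m, T n m * v m := by simp [hu, Matrix.mulVec, dotProduct]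
        rw [hun, Finset.mul_sum]
        exact Finset.sum_congr rfl fun m _ => by ring
      have : ∑ n, ∑ m, w n * v m * T n m = s⁻¹ * ∑ n, u n ^ 2 := by
        simp only [hterm, hw, Finset.mul_sum]
        exact Finset.sum_congr rfl fun n _ => by
          rw [show ∑ x, s⁻¹ * u n * v x * T n x = s⁻¹ * u n * u n from hterm n]; ring
      rw [this, ← hμ, ← Real.sq_sqrt hnn, ← hs, sq, ← mul_assoc,
        inv_mul_cancel₀ (ne_of_gt hs0), one_mul]
    have hle : s ≤ 1 := by
      have := corr_dot_le ρ h hw1 hv1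
      rw [← hT, key] at this
      exact this
    calc hM.eigenvalues j = s ^ 2 := (Real.sq_sqrt hnn).symm
      _ ≤ 1 := by nlinarith

lemma corr_herm (ρ : Matrix (Fin 2 × Fin 2) (Fin 2 × Fin 2) ℂ) :
    ((corr ρ)ᵀ * corr ρ).IsHermitian := by
  rw [← Matrix.conjTranspose_eq_transpose_of_trivial]
  exact Matrix.isHermitian_conjTranspose_mul_self _

lemma topEigs_mem (ρ : Matrix (Fin 2 × Fin 2) (Fin 2 × Fin 2) ℂ) (h : TwoQubitState ρ)
    {t1 t2 : ℝ} (ht : topEigs ((corr ρ)ᵀ * corr ρ) = (t1, t2)) :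
    t1 ∈ Set.Icc (0 : ℝ) 1 ∧ t2 ∈ Set.Icc (0 : ℝ) 1 := by
  rw [topEigs, dif_pos (corr_herm ρ)] at ht
  have h1 := congrArg Prod.fst ht
  have h2 := congrArg Prod.snd ht
  simp only [Function.comp] at h1 h2
  rw [← h1, ← h2]
  exact ⟨eig_mem_Icc ρ h _ _, eig_mem_Icc ρ h _ _⟩

noncomputable def rho0 : Matrix (Fin 2 × Fin 2) (Fin 2 × Fin 2) ℂ :=
  Matrix.of fun p q =>
    (2 : ℂ)⁻¹ * (if p = (0, 1) then 1 else if p = (1, 0) then -1 else 0)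
      * (if q = (0, 1) then 1 else if q = (1, 0) then -1 else 0)

lemma proj_psiMinus_eq : proj psiMinus = rho0 := by
  have h2 : ((Real.sqrt 2 : ℂ))⁻¹ * ((Real.sqrt 2 : ℂ))⁻¹ = (2 : ℂ)⁻¹ := by
    rw [← mul_inv, ← Complex.ofReal_mul, Real.mul_self_sqrt (by norm_num)]
    norm_num
  ext p q
  fin_cases p <;> fin_cases q <;>
    simp [proj, psiMinus, ket, rho0, Matrix.vecMulVec_apply, Prod.ext_iff, h2]

set_option maxHeartbeats 1000000 in
lemma corr_singlet : corr (proj psiMinus) = -1 := by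
  rw [proj_psiMinus_eq]
  ext n m
  fin_cases n <;> fin_cases m <;>
    · simp only [corr, Matrix.of_apply, Matrix.trace, Matrix.diag, Matrix.mul_apply,
        Fintype.sum_prod_type, Fin.sum_univ_two, Matrix.kroneckerMap_apply, rho0,
        Matrix.neg_apply, Matrix.one_apply, pauli]
      norm_num [Prod.ext_iff, Complex.ext_iff]
      all_goals decide

lemma eig_one (h : (1 : Matrix (Fin 3) (Fin 3) ℝ).IsHermitian) (j : Fin 3) :
    h.eigenvalues j = 1 := by
  have hmv := h.mulVec_eigenvectorBasis j
  rw [Matrix.one_mulVec] at hmv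
  have hne : ⇑(h.eigenvectorBasis j) ≠ 0 := by
    intro hz
    have hnorm : ‖h.eigenvectorBasis j‖ = 1 := h.eigenvectorBasis.orthonormal.1 j
    have : h.eigenvectorBasis j = 0 := by
      ext i
      exact congrFun hz i
    rw [this] at hnorm
    simp at hnorm
  obtain ⟨k, hk⟩ := Function.ne_iff.mp hne
  have := congrFun hmv k
  simp only [Pi.smul_apply, smul_eq_mul, Pi.zero_apply] at this hk
  exact mul_right_cancel₀ hk (by rw [← this, one_mul] : h.eigenvalues j * _ = 1 * _)

lemma topEigs_one : topEigs 1 = (1, 1) := by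
  have h : (1 : Matrix (Fin 3) (Fin 3) ℝ).IsHermitian := Matrix.isHermitian_one
  rw [topEigs, dif_pos h]
  simp [eig_one h]

/-- The maximal bilocality parameter B_max = √(√(t^A₁ t^C₁) + √(t^A₂ t^C₂)) of any
    pair of two-qubit states is at most √2, with equality when both states are
    the singlet |ψ⁻⟩⟨ψ⁻|. -/
theorem bilocality_parameter_le_sqrt_two
    (ρAB ρBC : Matrix (Fin 2 × Fin 2) (Fin 2 × Fin 2) ℂ)
    (hAB : TwoQubitState ρAB) (hBC : TwoQubitState ρBC)
    (tA1 tA2 tC1 tC2 : ℝ)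
    (htA : topEigs ((corr ρAB)ᵀ * corr ρAB) = (tA1, tA2))
    (htC : topEigs ((corr ρBC)ᵀ * corr ρBC) = (tC1, tC2)) :
    Real.sqrt (Real.sqrt (tA1 * tC1) + Real.sqrt (tA2 * tC2)) ≤ Real.sqrt 2 ∧
    (ρAB = proj psiMinus → ρBC = proj psiMinus →
      Real.sqrt (Real.sqrt (tA1 * tC1) + Real.sqrt (tA2 * tC2)) = Real.sqrt 2) := by
  constructor
  · obtain ⟨⟨hA10, hA11⟩, ⟨hA20, hA21⟩⟩ := topEigs_mem ρAB hAB htA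
    obtain ⟨⟨hC10, hC11⟩, ⟨hC20, hC21⟩⟩ := topEigs_mem ρBC hBC htC
    apply Real.sqrt_le_sqrt
    have h1 : Real.sqrt (tA1 * tC1) ≤ 1 :=
      Real.sqrt_le_one.mpr (by nlinarith)
    have h2 : Real.sqrt (tA2 * tC2) ≤ 1 :=
      Real.sqrt_le_one.mpr (by nlinarith)
    linarith
  · intro hA hC
    have eA : corr ρAB = -1 := by rw [hA]; exact corr_singlet
    have eC : corr ρBC = -1 := by rw [hC]; exact corr_singlet
    rw [eA] at htA
    rw [eC] at htC
    have hone : ((-1 : Matrix (Fin 3) (Fin 3) ℝ)ᵀ * (-1)) = 1 := by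
      simp
    rw [hone, topEigs_one] at htA htC
    obtain ⟨rfl, rfl⟩ : tA1 = 1 ∧ tA2 = 1 := by
      constructor <;> [exact (Prod.mk.injEq .. ▸ htA).1.symm;
        exact (Prod.mk.injEq .. ▸ htA).2.symm]
    obtain ⟨rfl, rfl⟩ : tC1 = 1 ∧ tC2 = 1 := by
      constructor <;> [exact (Prod.mk.injEq .. ▸ htC).1.symm;
        exact (Prod.mk.injEq .. ▸ htC).2.symm]
    norm_num
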